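/- The rarefaction fan is a weak solution: let G(u) = 2u(1−u)(2u−1), H(u) = 1 − 12(u − 1/2)², and let λ, ρ ∈ [0, 1/2] with λ ≤ ρ. Define u : ℝ × [0,∞) → ℝ by: u(x,0) = u₀(x), where u₀(x) = λ if x < 0 and u₀(x) = ρ if x ≥ 0; and for t > 0, u(x,t) = λ if x ≤ H(λ)·t, u(x,t) = 1/2 − √((1 − x/t)/12) if H(λ)·t < x < H(ρ)·t, and u(x,t) = ρ if x ≥ H(ρ)·t. Then u is a weak solution of ∂_t u + ∂_x G(u) = 0 with initial datum u₀: for every continuously differentiable φ : ℝ × ℝ → ℝ with compact support, ∫_0^∞ ∫_ℝ ( u(x,t) ∂_t φ(x,t) + G(u(x,t)) ∂_x φ(x,t) ) dx dt + ∫_ℝ u₀(x) φ(x,0) dx = 0. -/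

import Mathlib

open MeasureTheory

/-- The DEP macroscopic flux `G(u) = 2u(1-u)(2u-1)`. -/
def depG (u : ℝ) : ℝ := 2 * u * (1 - u) * (2 * u - 1)

/-- The characteristic speed `H(u) = G'(u) = 1 - 12(u - 1/2)²`. -/
noncomputable def depH (u : ℝ) : ℝ := 1 - 12 * (u - 1 / 2) ^ 2

/-- The self-similar fan profile. -/
noncomputable def fanV (l ρ : ℝ) (s : ℝ) : ℝ :=
  if s ≤ depH l then l else if s < depH ρ then 1 / 2 - Real.sqrt ((1 - s) / 12) else ρ

/-- The "potential" `W(s) = s v(s) − G(v(s))`. -/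
noncomputable def fanW (l ρ : ℝ) (s : ℝ) : ℝ :=
  s * fanV l ρ s - depG (fanV l ρ s)

noncomputable def fanG (s : ℝ) : ℝ := 1 / 2 - Real.sqrt ((1 - s) / 12)

lemma depG_hasDerivAt (u : ℝ) : HasDerivAt depG (depH u) u := by
  have h : HasDerivAt (fun u : ℝ => 2 * u * (1 - u) * (2 * u - 1))
      (1 - 12 * (u - 1 / 2) ^ 2) u := by
    have h1 : HasDerivAt (fun u : ℝ => 2 * u) 2 u := by
      simpa using (hasDerivAt_id u).const_mul 2
    have h2 : HasDerivAt (fun u : ℝ => 1 - u) (-1) u := by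
      simpa using (hasDerivAt_id u).const_sub 1
    have h3 : HasDerivAt (fun u : ℝ => 2 * u - 1) 2 u := by
      simpa using h1.sub_const 1
    have := ((h1.mul h2).mul h3)
    exact this.congr_deriv (by simp only [Pi.mul_apply]; ring)
  exact h

lemma fanG_mono : Monotone fanG := by
  intro s t hst
  have : Real.sqrt ((1 - t) / 12) ≤ Real.sqrt ((1 - s) / 12) :=
    Real.sqrt_le_sqrt (by linarith)
  simp only [fanG]; linarith

lemma fanG_continuous : Continuous fanG := by
  unfold fanG
  fun_prop

lemma fanG_depH {x : ℝ} (hx : x ∈ Set.Icc (0 : ℝ) (1 / 2)) : fanG (depH x) = x := by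
  have h1 : (1 - depH x) / 12 = (x - 1 / 2) ^ 2 := by unfold depH; ring
  have h2 : Real.sqrt ((1 - depH x) / 12) = 1 / 2 - x := by
    rw [h1]
    rw [show (x - 1/2) ^ 2 = (1/2 - x) ^ 2 by ring]
    exact Real.sqrt_sq (by linarith [hx.2])
  unfold fanG; rw [h2]; ring

lemma depG_continuous : Continuous depG := by unfold depG; fun_prop

lemma depG_bound {u : ℝ} (hu : u ∈ Set.Icc (0:ℝ) (1/2)) : |depG u| ≤ 1 := by
  obtain ⟨h0, h2⟩ := hu
  rw [abs_le]
  unfold depG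
  constructor <;> nlinarith [sq_nonneg u, sq_nonneg (u - 1/2), sq_nonneg (u+1),
    mul_nonneg h0 (by linarith : (0:ℝ) ≤ 1 - u),
    mul_nonneg (mul_nonneg h0 (by linarith : (0:ℝ) ≤ 1 - u)) (by linarith : (0:ℝ) ≤ 1 - 2*u)]

section

variable {l ρ : ℝ} (hl : l ∈ Set.Icc (0 : ℝ) (1 / 2))
    (hρ : ρ ∈ Set.Icc (0 : ℝ) (1 / 2)) (hlρ : l ≤ ρ)

include hl hρ hlρ

lemma depH_mono : depH l ≤ depH ρ := by
  unfold depH; nlinarith [hl.1, hl.2, hρ.2]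

lemma fanV_eq_fanG (s : ℝ) : fanV l ρ s = max l (min ρ (fanG s)) := by
  have hgl : fanG (depH l) = l := fanG_depH hl
  have hgr : fanG (depH ρ) = ρ := fanG_depH hρ
  unfold fanV
  split_ifs with h1 h2
  · have : fanG s ≤ l := hgl ▸ fanG_mono h1
    have : min ρ (fanG s) ≤ l := le_trans (min_le_right _ _) this
    exact (max_eq_left this).symm
  · have hls : l ≤ fanG s := hgl ▸ fanG_mono (le_of_lt (not_le.mp h1))
    have hsr : fanG s ≤ ρ := hgr ▸ fanG_mono (le_of_lt h2)
    rw [min_eq_right hsr, max_eq_right hls]; rfl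
  · have : ρ ≤ fanG s := hgr ▸ fanG_mono (not_lt.mp h2)
    rw [min_eq_left this, max_eq_right hlρ]

lemma fanV_continuous : Continuous (fanV l ρ) := by
  have : fanV l ρ = fun s => max l (min ρ (fanG s)) := by
    ext s; exact fanV_eq_fanG hl hρ hlρ s
  rw [this]
  exact continuous_const.max (continuous_const.min fanG_continuous)

lemma fanV_mem (s : ℝ) : fanV l ρ s ∈ Set.Icc (0 : ℝ) (1 / 2) := by
  rw [fanV_eq_fanG hl hρ hlρ s]
  constructor
  · exact le_trans hl.1 (le_max_left _ _)
  · exact max_le hl.2 (le_trans (min_le_left _ _) hρ.2)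

lemma fanW_continuous : Continuous (fanW l ρ) := by
  unfold fanW
  exact (continuous_id.mul (fanV_continuous hl hρ hlρ)).sub
    (depG_continuous.comp (fanV_continuous hl hρ hlρ))

lemma fanW_hasDerivAt {s : ℝ} (hs1 : s ≠ depH l) (hs2 : s ≠ depH ρ) :
    HasDerivAt (fanW l ρ) (fanV l ρ s) s := by
  rcases lt_trichotomy s (depH l) with h | h | h
  · have hev : fanW l ρ =ᶠ[nhds s] fun y => y * l - depG l := by
      filter_upwards [Iio_mem_nhds h] with y hy
      simp only [fanW, fanV, if_pos (le_of_lt (Set.mem_Iio.mp hy))]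
    have hval : fanV l ρ s = l := by simp [fanV, le_of_lt h]
    rw [hval]
    apply HasDerivAt.congr_of_eventuallyEq ?_ hev
    simpa using ((hasDerivAt_id s).mul_const l).sub_const (depG l)
  · exact absurd h hs1
  · rcases lt_trichotomy s (depH ρ) with h2 | h2 | h2
    · have hb1 : depH ρ ≤ 1 := by
        unfold depH; nlinarith [sq_nonneg (ρ - 1/2)]
      have hs1' : s < 1 := lt_of_lt_of_le h2 hb1
      have hev : fanW l ρ =ᶠ[nhds s]
          fun y => y * fanG y - depG (fanG y) := by
        filter_upwards [Ioo_mem_nhds h h2] with y hy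
        simp only [fanW, fanV, fanG, if_neg (not_le.mpr hy.1), if_pos hy.2]
      have hsq : HasDerivAt (fun y : ℝ => Real.sqrt ((1 - y) / 12))
          (1 / (2 * Real.sqrt ((1 - s) / 12)) * (-(1/12))) s := by
        have hinner : HasDerivAt (fun y : ℝ => (1 - y) / 12) (-(1/12)) s := by
          have : HasDerivAt (fun y : ℝ => (1 - y) / 12) ((-1) / 12) s := by
            simpa using (((hasDerivAt_id s).const_sub 1).div_const 12)
          convert this using 1; ring
        have hne : (1 - s) / 12 ≠ 0 := ne_of_gt (by linarith)
        exact (Real.hasDerivAt_sqrt hne).comp s hinner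
      have hg : HasDerivAt fanG (1 / (24 * Real.sqrt ((1 - s) / 12))) s := by
        have := (hsq.const_sub (1/2 : ℝ))
        have heq : fanG = fun y => 1/2 - Real.sqrt ((1 - y)/12) := rfl
        rw [heq]
        exact this.congr_deriv (by ring)
      set d := (1 / (24 * Real.sqrt ((1 - s) / 12)))
      have hW : HasDerivAt (fun y => y * fanG y - depG (fanG y))
          (fanG s + s * d - depH (fanG s) * d) s := by
        have h1 : HasDerivAt (fun y => y * fanG y) (1 * fanG s + s * d) s :=
          (hasDerivAt_id s).mul hg
        have h2 : HasDerivAt (fun y => depG (fanG y)) (depH (fanG s) * d) s :=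
          (depG_hasDerivAt (fanG s)).comp s hg
        exact (h1.sub h2).congr_deriv (by ring)
      have hHG : depH (fanG s) = s := by
        have hnn : (0:ℝ) ≤ (1 - s)/12 := by linarith
        simp only [fanG, depH]
        rw [show (1/2 - Real.sqrt ((1-s)/12) - 1/2) = -Real.sqrt ((1-s)/12) by ring]
        rw [neg_pow, Real.sq_sqrt hnn]
        ring
      have hval : fanV l ρ s = fanG s := by
        simp [fanV, fanG, not_le.mpr h, h2]
      rw [hval]
      apply HasDerivAt.congr_of_eventuallyEq ?_ hev
      rw [hHG] at hW
      exact hW.congr_deriv (by ring)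
    · exact absurd h2 hs2
    · have hba : depH l ≤ depH ρ := depH_mono hl hρ hlρ
      have hev : fanW l ρ =ᶠ[nhds s] fun y => y * ρ - depG ρ := by
        filter_upwards [Ioi_mem_nhds h2] with y hy
        have hy' : depH ρ < y := Set.mem_Ioi.mp hy
        simp only [fanW, fanV, if_neg (not_le.mpr (lt_of_le_of_lt hba hy')),
          if_neg (not_lt.mpr (le_of_lt hy'))]
      have hval : fanV l ρ s = ρ := by
        simp [fanV, not_le.mpr (lt_of_le_of_lt hba h2), not_lt.mpr (le_of_lt h2)]
      rw [hval]
      apply HasDerivAt.congr_of_eventuallyEq ?_ hev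
      simpa using ((hasDerivAt_id s).mul_const ρ).sub_const (depG ρ)

/-- Integration by parts against the fan potential. -/
lemma fan_ibp (ψ ψ' : ℝ → ℝ) (hψ : ∀ s, HasDerivAt ψ (ψ' s) s)
    (hψc : Continuous ψ') (M : ℝ)
    (hsupp : ∀ s : ℝ, M ≤ |s| → ψ s = 0) :
    ∫ s : ℝ, (fanV l ρ s * ψ s + fanW l ρ s * ψ' s) = 0 := by
  set a := depH l with ha
  set b := depH ρ with hb
  have hab : a ≤ b := depH_mono hl hρ hlρ
  set A : ℝ := min (-|M|) a with hA
  set B : ℝ := max |M| b with hB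
  have hAa : A ≤ a := min_le_right _ _
  have hbB : b ≤ B := le_max_right _ _
  have hAB : A ≤ B := le_trans hAa (le_trans hab hbB)
  have hψA : ψ A = 0 := by
    apply hsupp
    have h1 : A ≤ -|M| := min_le_left _ _
    linarith [le_abs_self M, neg_abs_le A]
  have hψB : ψ B = 0 := by
    apply hsupp
    have h1 : |M| ≤ B := le_max_left _ _
    linarith [le_abs_self M, le_abs_self B]
  set f : ℝ → ℝ := fun s => fanV l ρ s * ψ s + fanW l ρ s * ψ' s with hf
  have hψ0 : ∀ s : ℝ, s ∉ Set.Icc A B → ψ s = 0 ∧ ψ' s = 0 := by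
    intro s hs
    have hout : M ≤ |s| ∧ ∃ δ > 0, ∀ y, |y - s| < δ → M ≤ |y| := by
      rw [Set.mem_Icc, not_and_or, not_le, not_le] at hs
      rcases hs with hs | hs
      · have hsM : s < -|M| := lt_of_lt_of_le hs (min_le_left _ _)
        refine ⟨by linarith [le_abs_self M, neg_abs_le s], -|M| - s, by linarith, ?_⟩
        intro y hy
        rw [abs_lt] at hy
        linarith [le_abs_self M, neg_abs_le y]
      · have hsM : |M| < s := lt_of_le_of_lt (le_max_left _ _) hs
        refine ⟨by linarith [le_abs_self M, le_abs_self s], s - |M|, by linarith, ?_⟩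
        intro y hy
        rw [abs_lt] at hy
        linarith [le_abs_self M, le_abs_self y]
    obtain ⟨hM, δ, hδ, hball⟩ := hout
    refine ⟨hsupp s hM, ?_⟩
    have hev : ψ =ᶠ[nhds s] fun _ => 0 := by
      filter_upwards [Metric.ball_mem_nhds s hδ] with y hy
      exact hsupp y (hball y (by simpa [Real.dist_eq] using hy))
    have h0 : HasDerivAt ψ 0 s :=
      HasDerivAt.congr_of_eventuallyEq (hasDerivAt_const s (0:ℝ)) hev
    exact ((hψ s).unique h0)
  have hred : (∫ s : ℝ, f s) = ∫ s in Set.Icc A B, f s := by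
    symm
    apply setIntegral_eq_integral_of_forall_compl_eq_zero
    intro s hs
    obtain ⟨h1, h2⟩ := hψ0 s hs
    simp [hf, h1, h2]
  have hψcont : Continuous ψ := by
    have : Differentiable ℝ ψ := fun s => (hψ s).differentiableAt
    exact this.continuous
  have hfc : Continuous f :=
    ((fanV_continuous hl hρ hlρ).mul hψcont).add ((fanW_continuous hl hρ hlρ).mul hψc)
  have hIcc : (∫ s in Set.Icc A B, f s) = ∫ s in A..B, f s := by
    rw [integral_Icc_eq_integral_Ioc, intervalIntegral.integral_of_le hAB]
  have hii : ∀ c d : ℝ, IntervalIntegrable f volume c d := fun c d =>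
    hfc.intervalIntegrable c d
  have key : ∀ c d : ℝ, c ≤ d → (∀ s ∈ Set.Ioo c d, s ≠ a ∧ s ≠ b) →
      (∫ s in c..d, f s) = fanW l ρ d * ψ d - fanW l ρ c * ψ c := by
    intro c d hcd hne
    have hcont : ContinuousOn (fun s => fanW l ρ s * ψ s) (Set.Icc c d) :=
      ((fanW_continuous hl hρ hlρ).mul hψcont).continuousOn
    have hderiv : ∀ s ∈ Set.Ioo c d,
        HasDerivWithinAt (fun s => fanW l ρ s * ψ s) (f s) (Set.Ioi s) s := by
      intro s hs
      obtain ⟨h1, h2⟩ := hne s hs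
      have hW := fanW_hasDerivAt hl hρ hlρ (s := s) h1 h2
      exact (hW.mul (hψ s)).hasDerivWithinAt
    exact intervalIntegral.integral_eq_sub_of_hasDeriv_right_of_le hcd hcont hderiv (hii c d)
  have k1 := key A a hAa (fun s hs => ⟨ne_of_lt hs.2, ne_of_lt (lt_of_lt_of_le hs.2 hab)⟩)
  have k2 := key a b hab (fun s hs => ⟨ne_of_gt hs.1, ne_of_lt hs.2⟩)
  have k3 := key b B hbB (fun s hs => ⟨ne_of_gt (lt_of_le_of_lt hab hs.1), ne_of_gt hs.1⟩)
  have hsplit : (∫ s in A..B, f s) = (∫ s in A..a, f s) + (∫ s in a..b, f s) + (∫ s in b..B, f s) := by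
    rw [intervalIntegral.integral_add_adjacent_intervals (hii A a) (hii a b),
      intervalIntegral.integral_add_adjacent_intervals (hii A b) (hii b B)]
  rw [hred, hIcc, hsplit, k1, k2, k3, hψA, hψB]
  ring

end
/-- The rarefaction fan is a weak solution of the conservation law
`∂_t u + ∂_x G(u) = 0` with Riemann initial datum `u₀ = λ·1_{x<0} + ρ·1_{x≥0}`,
for `λ ≤ ρ` both in `[0, 1/2]`. -/
theorem dep_rarefaction_is_weak_solution
    (l ρ : ℝ) (hl : l ∈ Set.Icc (0 : ℝ) (1 / 2)) (hρ : ρ ∈ Set.Icc (0 : ℝ) (1 / 2))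
    (hlρ : l ≤ ρ)
    (u₀ : ℝ → ℝ) (hu₀ : ∀ x : ℝ, u₀ x = if x < 0 then l else ρ)
    (u : ℝ → ℝ → ℝ)
    (hu0 : ∀ x : ℝ, u x 0 = u₀ x)
    (hu : ∀ x t : ℝ, 0 < t → u x t =
      if x ≤ depH l * t then l
      else if x < depH ρ * t then 1 / 2 - Real.sqrt ((1 - x / t) / 12)
      else ρ)
    (φ : ℝ → ℝ → ℝ)
    (hφ : ContDiff ℝ 1 (fun p : ℝ × ℝ => φ p.1 p.2))
    (hφsupp : HasCompactSupport (fun p : ℝ × ℝ => φ p.1 p.2)) :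
    (∫ t in Set.Ioi (0 : ℝ), ∫ x : ℝ,
        (u x t * deriv (fun s => φ x s) t
          + depG (u x t) * deriv (fun y => φ y t) x))
      + (∫ x : ℝ, u₀ x * φ x 0) = 0 := by
  set Φ : ℝ × ℝ → ℝ := fun p => φ p.1 p.2 with hΦdef
  set φx : ℝ → ℝ → ℝ := fun x t => fderiv ℝ Φ (x, t) (1, 0) with hφxdef
  set φt : ℝ → ℝ → ℝ := fun x t => fderiv ℝ Φ (x, t) (0, 1) with hφtdef
  have hΦdiff : Differentiable ℝ Φ := hφ.differentiable one_ne_zero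
  have hΦc : Continuous Φ := hφ.continuous
  have hfderivc : Continuous (fun p => fderiv ℝ Φ p) := hφ.continuous_fderiv one_ne_zero
  have hφxc : Continuous (fun p : ℝ × ℝ => φx p.1 p.2) := by
    simp only [hφxdef]
    exact hfderivc.clm_apply continuous_const
  have hφtc : Continuous (fun p : ℝ × ℝ => φt p.1 p.2) := by
    simp only [hφtdef]
    exact hfderivc.clm_apply continuous_const
  -- directional derivatives
  have hderiv_t : ∀ x t : ℝ, HasDerivAt (fun s => φ x s) (φt x t) t := by
    intro x t
    have hpath : HasDerivAt (fun s : ℝ => ((x, s) : ℝ × ℝ)) ((0 : ℝ), (1 : ℝ)) t :=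
      (hasDerivAt_const t x).prodMk (hasDerivAt_id t)
    have := (hΦdiff (x, t)).hasFDerivAt.comp_hasDerivAt t hpath
    simpa [Function.comp_def, hΦdef] using this
  have hderiv_x : ∀ x t : ℝ, HasDerivAt (fun y => φ y t) (φx x t) x := by
    intro x t
    have hpath : HasDerivAt (fun y : ℝ => ((y, t) : ℝ × ℝ)) ((1 : ℝ), (0 : ℝ)) x :=
      (hasDerivAt_id x).prodMk (hasDerivAt_const x t)
    have := (hΦdiff (x, t)).hasFDerivAt.comp_hasDerivAt x hpath
    simpa [Function.comp_def, hΦdef] using this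
  -- a diagonal derivative along (t*s, t)
  have hderiv_diag : ∀ s t : ℝ, HasDerivAt (fun t => Φ (t * s, t))
      (s * φx (t * s) t + φt (t * s) t) t := by
    intro s t
    have hpath : HasDerivAt (fun t : ℝ => ((t * s, t) : ℝ × ℝ)) ((s : ℝ), (1 : ℝ)) t := by
      have h1 : HasDerivAt (fun t : ℝ => t * s) s t := by
        simpa using (hasDerivAt_id t).mul_const s
      exact h1.prodMk (hasDerivAt_id t)
    have hcomp := HasFDerivAt.comp_hasDerivAt (l := Φ)
      (f := fun t : ℝ => ((t * s, t) : ℝ × ℝ)) t ((hΦdiff (t * s, t)).hasFDerivAt) hpath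
    have hlin : fderiv ℝ Φ (t * s, t) ((s : ℝ), (1 : ℝ))
        = s * φx (t * s) t + φt (t * s) t := by
      have hv : ((s : ℝ), (1 : ℝ)) = s • ((1 : ℝ), (0 : ℝ)) + ((0 : ℝ), (1 : ℝ)) := by
        simp [Prod.ext_iff]
      rw [hv, (fderiv ℝ Φ (t * s, t)).map_add, (fderiv ℝ Φ (t * s, t)).map_smul,
        smul_eq_mul, hφxdef, hφtdef]
    rw [hlin] at hcomp
    exact hcomp
  -- same along (t*s, t) in s for fixed t
  have hderiv_s : ∀ t s : ℝ, HasDerivAt (fun s => Φ (t * s, t)) (t * φx (t * s) t) s := by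
    intro t s
    have hpath : HasDerivAt (fun s : ℝ => ((t * s, t) : ℝ × ℝ)) ((t : ℝ), (0 : ℝ)) s := by
      have h1 : HasDerivAt (fun s : ℝ => t * s) t s := by
        simpa using (hasDerivAt_id s).const_mul t
      exact h1.prodMk (hasDerivAt_const s t)
    have hcomp := HasFDerivAt.comp_hasDerivAt (l := Φ)
      (f := fun s : ℝ => ((t * s, t) : ℝ × ℝ)) s ((hΦdiff (t * s, t)).hasFDerivAt) hpath
    have hlin : fderiv ℝ Φ (t * s, t) ((t : ℝ), (0 : ℝ)) = t * φx (t * s) t := by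
      have hv : ((t : ℝ), (0 : ℝ)) = t • ((1 : ℝ), (0 : ℝ)) := by simp [Prod.ext_iff]
      rw [hv, (fderiv ℝ Φ (t * s, t)).map_smul, smul_eq_mul, hφxdef]
    rw [hlin] at hcomp
    exact hcomp
  -- support radius
  obtain ⟨R, hR0, hRsupp⟩ := hφsupp.exists_pos_le_norm
  have hout : ∀ x t : ℝ, R < max |x| |t| →
      Φ (x, t) = 0 ∧ φx x t = 0 ∧ φt x t = 0 := by
    intro x t hxt
    have hnorm : ‖((x, t) : ℝ × ℝ)‖ = max |x| |t| := rfl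
    have hns : (x, t) ∉ tsupport Φ := by
      intro hmem
      have hsub : tsupport Φ ⊆ Metric.closedBall 0 R := by
        apply closure_minimal ?_ Metric.isClosed_closedBall
        intro q hq
        simp only [Metric.mem_closedBall, dist_zero_right]
        by_contra hq'
        exact hq (hRsupp q (le_of_lt (not_le.mp hq')))
      have := hsub hmem
      simp only [Metric.mem_closedBall, dist_zero_right] at this
      rw [hnorm] at this
      linarith
    have hfd : fderiv ℝ Φ (x, t) = 0 := by
      by_contra h
      exact hns (support_fderiv_subset ℝ (f := Φ) h)
    refine ⟨image_eq_zero_of_notMem_tsupport hns, ?_, ?_⟩ <;>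
      simp [hφxdef, hφtdef, hfd]
  -- uniform bounds
  obtain ⟨K₁, hK₁⟩ := hΦc.bounded_above_of_compact_support hφsupp
  obtain ⟨K₂, hK₂⟩ := hfderivc.bounded_above_of_compact_support (hφsupp.fderiv ℝ)
  set K : ℝ := max (max K₁ K₂) 1 with hKdef
  have hK1 : (1 : ℝ) ≤ K := le_max_right _ _
  have hK0 : (0 : ℝ) < K := lt_of_lt_of_le one_pos hK1
  have hKΦ : ∀ x t : ℝ, |Φ (x, t)| ≤ K := fun x t =>
    le_trans (hK₁ (x, t)) (le_trans (le_max_left _ _) (le_max_left _ _))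
  have hKd : ∀ x t : ℝ, ‖fderiv ℝ Φ (x, t)‖ ≤ K := fun x t =>
    le_trans (hK₂ (x, t)) (le_trans (le_max_right _ _) (le_max_left _ _))
  have hKx : ∀ x t : ℝ, |φx x t| ≤ K := by
    intro x t
    have h1 : |φx x t| ≤ ‖fderiv ℝ Φ (x, t)‖ * ‖((1 : ℝ), (0 : ℝ))‖ :=
      (fderiv ℝ Φ (x, t)).le_opNorm _
    have h2 : ‖((1 : ℝ), (0 : ℝ))‖ = 1 := by simp [Prod.norm_def]
    rw [h2, mul_one] at h1
    exact le_trans h1 (hKd x t)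
  have hKt : ∀ x t : ℝ, |φt x t| ≤ K := by
    intro x t
    have h1 : |φt x t| ≤ ‖fderiv ℝ Φ (x, t)‖ * ‖((0 : ℝ), (1 : ℝ))‖ :=
      (fderiv ℝ Φ (x, t)).le_opNorm _
    have h2 : ‖((0 : ℝ), (1 : ℝ))‖ = 1 := by simp [Prod.norm_def]
    rw [h2, mul_one] at h1
    exact le_trans h1 (hKd x t)
  -- bounds on the profile
  have hVmem := fun s => fanV_mem hl hρ hlρ s
  have hVb : ∀ s : ℝ, |fanV l ρ s| ≤ 1 := by
    intro s
    have := hVmem s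
    rw [abs_le]; constructor <;> [linarith [this.1]; linarith [this.2]]
  have hGVb : ∀ s : ℝ, |depG (fanV l ρ s)| ≤ 1 := fun s => depG_bound (hVmem s)
  have hVc : Continuous (fanV l ρ) := fanV_continuous hl hρ hlρ
  -- the main players
  set F : ℝ → ℝ := fun t => ∫ x : ℝ,
      (fanV l ρ (x / t) * φt x t + depG (fanV l ρ (x / t)) * φx x t) with hFdef
  set I0 : ℝ := ∫ x : ℝ, u₀ x * φ x 0 with hI0def
  set Ibar : ℝ → ℝ := fun t =>
      if 0 < t then ∫ x : ℝ, fanV l ρ (x / t) * φ x t else I0 with hIbardef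
  set J : ℝ → ℝ := fun t => ∫ s : ℝ, fanV l ρ s * (t * φ (t * s) t) with hJdef
  -- substitution x = t s
  have hsub : ∀ t : ℝ, 0 < t → ∀ g : ℝ → ℝ, (∫ x : ℝ, g x) = t * ∫ s : ℝ, g (t * s) := by
    intro t ht g
    rw [MeasureTheory.Measure.integral_comp_mul_left g t, abs_of_pos (inv_pos.mpr ht),
      smul_eq_mul, ← mul_assoc, mul_inv_cancel₀ (ne_of_gt ht), one_mul]
  -- rewrite goal in terms of F and I0
  have hgoal : (∫ t in Set.Ioi (0 : ℝ), ∫ x : ℝ,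
        (u x t * deriv (fun s => φ x s) t
          + depG (u x t) * deriv (fun y => φ y t) x)) = ∫ t in Set.Ioi (0 : ℝ), F t := by
    apply setIntegral_congr_fun measurableSet_Ioi
    intro t ht
    have ht' : (0 : ℝ) < t := ht
    apply integral_congr_ae
    apply Filter.Eventually.of_forall
    intro x
    beta_reduce
    have h1 : deriv (fun s => φ x s) t = φt x t := (hderiv_t x t).deriv
    have h2 : deriv (fun y => φ y t) x = φx x t := (hderiv_x x t).deriv
    have h3 : u x t = fanV l ρ (x / t) := by
      rw [hu x t ht']
      unfold fanV
      have e1 : x ≤ depH l * t ↔ x / t ≤ depH l := (div_le_iff₀ ht').symm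
      have e2 : x < depH ρ * t ↔ x / t < depH ρ := (div_lt_iff₀ ht').symm
      by_cases c1 : x / t ≤ depH l
      · rw [if_pos (e1.mpr c1), if_pos c1]
      · rw [if_neg (fun h => c1 (e1.mp h)), if_neg c1]
        by_cases c2 : x / t < depH ρ
        · rw [if_pos (e2.mpr c2), if_pos c2]
        · rw [if_neg (fun h => c2 (e2.mp h)), if_neg c2]
    rw [h1, h2, h3]
  -- J agrees with Ibar on positive times
  have habs_out : ∀ M s : ℝ, s ∉ Set.Icc (-M) M → M ≤ |s| := by
    intro M s hs
    rw [Set.mem_Icc, not_and_or, not_le, not_le] at hs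
    rcases hs with hs | hs
    · linarith [neg_abs_le s]
    · linarith [le_abs_self s]
  have hJeq : ∀ t : ℝ, 0 < t → Ibar t = J t := by
    intro t ht
    rw [hIbardef, hJdef]
    simp only [if_pos ht]
    rw [hsub t ht (fun x => fanV l ρ (x / t) * φ x t)]
    rw [← integral_const_mul]
    apply integral_congr_ae
    apply Filter.Eventually.of_forall
    intro s
    beta_reduce
    rw [mul_div_cancel_left₀ s (ne_of_gt ht)]
    ring
  -- the derivative of J is F on positive times
  have hJderiv : ∀ t₀ : ℝ, 0 < t₀ → HasDerivAt J (F t₀) t₀ := by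
    intro t₀ ht₀
    set M : ℝ := 2 * (R + 1) / t₀ with hMdef
    have hM0 : 0 < M := by positivity
    have htM : t₀ / 2 * M = R + 1 := by rw [hMdef]; field_simp
    set e : ℝ → ℝ → ℝ := fun t s => fanV l ρ s * (t * Φ (t * s, t)) with hedef
    set e' : ℝ → ℝ → ℝ := fun t s =>
      fanV l ρ s * (Φ (t * s, t) + t * (s * φx (t * s) t + φt (t * s) t)) with he'def
    have hJ' : J = fun t => ∫ s : ℝ, e t s := rfl
    have hvanish : ∀ t s : ℝ, t ∈ Metric.ball t₀ (t₀ / 2) → M ≤ |s| →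
        Φ (t * s, t) = 0 ∧ φx (t * s) t = 0 ∧ φt (t * s) t = 0 := by
      intro t s htball hMs
      apply hout
      have ht1 : t₀ / 2 < t := by
        have := Metric.mem_ball.mp htball
        rw [Real.dist_eq, abs_lt] at this
        linarith
      have habs : R < |t * s| := by
        rw [abs_mul]
        have h1 : t₀ / 2 * M ≤ |t| * |s| := by
          apply mul_le_mul _ hMs (le_of_lt hM0) (abs_nonneg t)
          rw [abs_of_pos (by linarith : (0:ℝ) < t)]
          linarith
        rw [htM] at h1
        linarith
      exact lt_of_lt_of_le habs (le_max_left _ _)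
    have hederiv : ∀ t s : ℝ, HasDerivAt (fun t => e t s) (e' t s) t := by
      intro t s
      have h1 : HasDerivAt (fun t : ℝ => t * Φ (t * s, t))
          (1 * Φ (t * s, t) + t * (s * φx (t * s) t + φt (t * s) t)) t :=
        (hasDerivAt_id t).mul (hderiv_diag s t)
      have h2 := h1.const_mul (fanV l ρ s)
      simp only [one_mul] at h2
      exact h2
    have hecont : ∀ t : ℝ, Continuous (fun s => e t s) := by
      intro t
      apply hVc.mul
      apply continuous_const.mul
      exact hΦc.comp ((continuous_const.mul continuous_id).prodMk continuous_const)
    have he'cont : ∀ t : ℝ, Continuous (fun s => e' t s) := by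
      intro t
      apply hVc.mul
      have hpath : Continuous (fun s : ℝ => ((t * s, t) : ℝ × ℝ)) :=
        (continuous_const.mul continuous_id).prodMk continuous_const
      apply (hΦc.comp hpath).add
      apply continuous_const.mul
      apply ((continuous_id.mul (hφxc.comp hpath))).add (hφtc.comp hpath)
    set C : ℝ := K + 2 * t₀ * (M * K + K) with hCdef
    have hC0 : 0 ≤ C := by
      have : 0 ≤ M * K + K := by positivity
      have : 0 ≤ 2 * t₀ * (M * K + K) := by positivity
      linarith [le_of_lt hK0]
    set bound : ℝ → ℝ := Set.indicator (Set.Icc (-M) M) (fun _ => C) with hbounddef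
    have hbound_int : Integrable bound := by
      rw [hbounddef]
      rw [integrable_indicator_iff measurableSet_Icc]
      exact integrableOn_const measure_Icc_lt_top.ne
    have hbound : ∀ s : ℝ, ∀ t ∈ Metric.ball t₀ (t₀ / 2), ‖e' t s‖ ≤ bound s := by
      intro s t htball
      have ht1 : t₀ / 2 < t := by
        have := Metric.mem_ball.mp htball
        rw [Real.dist_eq, abs_lt] at this
        linarith
      have ht2 : t < 2 * t₀ := by
        have := Metric.mem_ball.mp htball
        rw [Real.dist_eq, abs_lt] at this
        linarith
      by_cases hs : s ∈ Set.Icc (-M) M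
      · have hsM : |s| ≤ M := by
          rw [abs_le]; exact ⟨hs.1, hs.2⟩
        have hb : bound s = C := Set.indicator_of_mem hs _
        rw [hb, he'def]
        rw [Real.norm_eq_abs, abs_mul]
        have h1 : |fanV l ρ s| ≤ 1 := hVb s
        have h2 : |Φ (t * s, t) + t * (s * φx (t * s) t + φt (t * s) t)| ≤ C := by
          have hb1 : |Φ (t * s, t)| ≤ K := hKΦ _ _
          have hb2 : |s * φx (t * s) t| ≤ M * K := by
            rw [abs_mul]
            exact mul_le_mul hsM (hKx _ _) (abs_nonneg _) (le_of_lt hM0)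
          have hb3 : |φt (t * s) t| ≤ K := hKt _ _
          have hb4 : |t * (s * φx (t * s) t + φt (t * s) t)| ≤ 2 * t₀ * (M * K + K) := by
            rw [abs_mul]
            apply mul_le_mul
            · rw [abs_of_pos (by linarith : (0:ℝ) < t)]; linarith
            · exact le_trans (abs_add_le _ _) (by linarith)
            · exact abs_nonneg _
            · positivity
          calc |Φ (t * s, t) + t * (s * φx (t * s) t + φt (t * s) t)|
              ≤ |Φ (t * s, t)| + |t * (s * φx (t * s) t + φt (t * s) t)| := abs_add_le _ _
            _ ≤ K + 2 * t₀ * (M * K + K) := by linarith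
        calc |fanV l ρ s| * |Φ (t * s, t) + t * (s * φx (t * s) t + φt (t * s) t)|
            ≤ 1 * C := mul_le_mul h1 h2 (abs_nonneg _) zero_le_one
          _ = C := one_mul C
      · have hsM : M ≤ |s| := habs_out M s hs
        obtain ⟨hz1, hz2, hz3⟩ := hvanish t s htball hsM
        have hb : bound s = 0 := Set.indicator_of_notMem hs _
        rw [hb, he'def]
        beta_reduce
        rw [hz1, hz2, hz3]
        simp
    have he_supp : ∀ t : ℝ, t ∈ Metric.ball t₀ (t₀ / 2) → ∀ s : ℝ, s ∉ Set.Icc (-M) M →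
        e t s = 0 := by
      intro t htball s hs
      have := (hvanish t s htball (habs_out M s hs)).1
      rw [hedef]
      beta_reduce
      rw [this]
      ring
    have hball_self : t₀ ∈ Metric.ball t₀ (t₀ / 2) :=
      Metric.mem_ball_self (by linarith)
    have he_int : Integrable (fun s => e t₀ s) := by
      apply (hecont t₀).integrable_of_hasCompactSupport
      apply HasCompactSupport.intro isCompact_Icc
      exact he_supp t₀ hball_self
    have hdc := hasDerivAt_integral_of_dominated_loc_of_deriv_le
      (F := fun t s => e t s) (F' := fun t s => e' t s) (x₀ := t₀)
      (bound := bound) (Metric.ball_mem_nhds t₀ (by linarith : (0:ℝ) < t₀ / 2))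
      (Filter.Eventually.of_forall (fun t => (hecont t).aestronglyMeasurable))
      he_int ((he'cont t₀).aestronglyMeasurable)
      (Filter.Eventually.of_forall (fun s => hbound s)) hbound_int
      (Filter.Eventually.of_forall (fun s t _ => hederiv t s))
    have hJd : HasDerivAt J (∫ s : ℝ, e' t₀ s) t₀ := by
      rw [hJ']
      exact hdc.2
    -- now identify the integral with F t₀
    have hFt : F t₀ = ∫ s : ℝ, t₀ * (fanV l ρ s * φt (t₀ * s) t₀
        + depG (fanV l ρ s) * φx (t₀ * s) t₀) := by
      rw [hFdef]
      beta_reduce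
      rw [hsub t₀ ht₀ (fun x => fanV l ρ (x / t₀) * φt x t₀
        + depG (fanV l ρ (x / t₀)) * φx x t₀)]
      rw [← integral_const_mul]
      apply integral_congr_ae
      apply Filter.Eventually.of_forall
      intro s
      beta_reduce
      rw [mul_div_cancel_left₀ s (ne_of_gt ht₀)]
    set ψ : ℝ → ℝ := fun s => Φ (t₀ * s, t₀) with hψdef
    set ψ' : ℝ → ℝ := fun s => t₀ * φx (t₀ * s) t₀ with hψ'def
    have hψd : ∀ s, HasDerivAt ψ (ψ' s) s := hderiv_s t₀
    have hψc : Continuous ψ' := by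
      apply continuous_const.mul
      exact hφxc.comp ((continuous_const.mul continuous_id).prodMk continuous_const)
    have hψsupp : ∀ s : ℝ, M ≤ |s| → ψ s = 0 := fun s hs =>
      (hvanish t₀ s hball_self hs).1
    have hibp := fan_ibp hl hρ hlρ ψ ψ' hψd hψc M hψsupp
    have hsame : ∀ s : ℝ, e' t₀ s = t₀ * (fanV l ρ s * φt (t₀ * s) t₀
        + depG (fanV l ρ s) * φx (t₀ * s) t₀)
        + (fanV l ρ s * ψ s + fanW l ρ s * ψ' s) := by
      intro s
      rw [he'def, hψdef, hψ'def, fanW]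
      beta_reduce
      ring
    have hint1 : Integrable (fun s : ℝ => t₀ * (fanV l ρ s * φt (t₀ * s) t₀
        + depG (fanV l ρ s) * φx (t₀ * s) t₀)) := by
      apply Continuous.integrable_of_hasCompactSupport
      · apply continuous_const.mul
        have hpath : Continuous (fun s : ℝ => ((t₀ * s, t₀) : ℝ × ℝ)) :=
          (continuous_const.mul continuous_id).prodMk continuous_const
        exact ((hVc.mul (hφtc.comp hpath))).add
          ((depG_continuous.comp hVc).mul (hφxc.comp hpath))
      · apply HasCompactSupport.intro isCompact_Icc
        intro s hs
        obtain ⟨_, hz2, hz3⟩ := hvanish t₀ s hball_self (habs_out M s hs)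
        beta_reduce
        rw [hz2, hz3]
        ring
    have hint2 : Integrable (fun s : ℝ => fanV l ρ s * ψ s + fanW l ρ s * ψ' s) := by
      apply Continuous.integrable_of_hasCompactSupport
      · have hpath : Continuous (fun s : ℝ => ((t₀ * s, t₀) : ℝ × ℝ)) :=
          (continuous_const.mul continuous_id).prodMk continuous_const
        exact (hVc.mul (hΦc.comp hpath)).add ((fanW_continuous hl hρ hlρ).mul hψc)
      · apply HasCompactSupport.intro isCompact_Icc
        intro s hs
        have hMs := habs_out M s hs
        obtain ⟨hz1, hz2, _⟩ := hvanish t₀ s hball_self hMs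
        beta_reduce
        rw [hψdef, hψ'def]
        beta_reduce
        rw [hz1, hz2]
        ring
    have hintegral : (∫ s : ℝ, e' t₀ s) = F t₀ := by
      have : (∫ s : ℝ, e' t₀ s) = ∫ s : ℝ, (t₀ * (fanV l ρ s * φt (t₀ * s) t₀
          + depG (fanV l ρ s) * φx (t₀ * s) t₀)
          + (fanV l ρ s * ψ s + fanW l ρ s * ψ' s)) := by
        apply integral_congr_ae
        exact Filter.Eventually.of_forall hsame
      rw [this, integral_add hint1 hint2, hibp, add_zero, hFt]
    rw [hintegral] at hJd
    exact hJd
  set T : ℝ := R + 1 with hTdef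
  have hT0 : (0 : ℝ) < T := by linarith
  -- F vanishes beyond T
  have hFzero : ∀ t : ℝ, T ≤ t → F t = 0 := by
    intro t htT
    rw [hFdef]
    apply integral_eq_zero_of_ae
    apply Filter.Eventually.of_forall
    intro x
    have h := hout x t (lt_of_lt_of_le (by rw [abs_of_pos (by linarith : (0:ℝ) < t)]; linarith)
      (le_max_right |x| |t|))
    beta_reduce
    rw [h.2.1, h.2.2]
    simp
  -- uniform domination for F
  set Cb : ℝ → ℝ := Set.indicator (Set.Icc (-(R+1)) (R+1)) (fun _ => 2 * K) with hCbdef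
  have hCb_int : Integrable Cb := by
    rw [hCbdef, integrable_indicator_iff measurableSet_Icc]
    exact integrableOn_const measure_Icc_lt_top.ne
  have hFbound : ∀ t x : ℝ,
      ‖fanV l ρ (x / t) * φt x t + depG (fanV l ρ (x / t)) * φx x t‖ ≤ Cb x := by
    intro t x
    by_cases hx : x ∈ Set.Icc (-(R+1)) (R+1)
    · rw [hCbdef, Set.indicator_of_mem hx, Real.norm_eq_abs]
      have h1 := hVb (x / t)
      have h2 := hGVb (x / t)
      have h3 := hKt x t
      have h4 := hKx x t
      calc |fanV l ρ (x / t) * φt x t + depG (fanV l ρ (x / t)) * φx x t|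
          ≤ |fanV l ρ (x / t) * φt x t| + |depG (fanV l ρ (x / t)) * φx x t| := abs_add_le _ _
        _ ≤ 1 * K + 1 * K := by
            rw [abs_mul, abs_mul]
            have e1 := mul_le_mul h1 h3 (abs_nonneg _) zero_le_one
            have e2 := mul_le_mul h2 h4 (abs_nonneg _) zero_le_one
            linarith
        _ = 2 * K := by ring
    · have hxR : R < |x| := by
        have := habs_out (R+1) x hx
        linarith
      have h := hout x t (lt_of_lt_of_le hxR (le_max_left _ _))
      rw [hCbdef, Set.indicator_of_notMem hx, h.2.1, h.2.2]
      simp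
  have hFintegrand_cont : ∀ t : ℝ, Continuous
      (fun x => fanV l ρ (x / t) * φt x t + depG (fanV l ρ (x / t)) * φx x t) := by
    intro t
    have hdiv : Continuous (fun x : ℝ => x / t) := continuous_id.div_const t
    have hpath : Continuous (fun x : ℝ => ((x, t) : ℝ × ℝ)) :=
      continuous_id.prodMk continuous_const
    exact ((hVc.comp hdiv).mul (hφtc.comp hpath)).add
      ((depG_continuous.comp (hVc.comp hdiv)).mul (hφxc.comp hpath))
  have hFcont : ∀ t₀ : ℝ, 0 < t₀ → ContinuousAt F t₀ := by
    intro t₀ ht₀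
    rw [hFdef]
    apply continuousAt_of_dominated (bound := Cb)
    · exact Filter.Eventually.of_forall fun t => (hFintegrand_cont t).aestronglyMeasurable
    · exact Filter.Eventually.of_forall fun t =>
        Filter.Eventually.of_forall fun x => hFbound t x
    · exact hCb_int
    · apply Filter.Eventually.of_forall
      intro x
      have h1 : ContinuousAt (fun t : ℝ => fanV l ρ (x / t)) t₀ :=
        hVc.continuousAt.comp ((continuousAt_const.div continuousAt_id (ne_of_gt ht₀)))
      have hpath : ContinuousAt (fun t : ℝ => ((x, t) : ℝ × ℝ)) t₀ :=
        (continuous_const.prodMk continuous_id).continuousAt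
      have h2 : ContinuousAt (fun t : ℝ => φt x t) t₀ := hφtc.continuousAt.comp hpath
      have h3 : ContinuousAt (fun t : ℝ => φx x t) t₀ := hφxc.continuousAt.comp hpath
      exact (h1.mul h2).add ((depG_continuous.continuousAt.comp h1).mul h3)
  -- Ibar value at 0
  have hIbar0 : Ibar 0 = I0 := by rw [hIbardef]; simp
  -- a.e. nonzero
  have hae : ∀ᵐ x : ℝ, x ≠ 0 := by
    have h := compl_mem_ae_iff (μ := (volume : Measure ℝ)).mpr
      (measure_singleton (0 : ℝ))
    filter_upwards [h] with x hx
    simpa using hx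
  -- convergence of Ibar at 0⁺
  have htend : Filter.Tendsto Ibar (nhdsWithin 0 (Set.Ioi 0)) (nhds I0) := by
    have h1 : Filter.Tendsto (fun t => ∫ x : ℝ, fanV l ρ (x / t) * φ x t)
        (nhdsWithin 0 (Set.Ioi 0)) (nhds I0) := by
      rw [hI0def]
      apply tendsto_integral_filter_of_dominated_convergence
        (bound := Set.indicator (Set.Icc (-(R+1)) (R+1)) (fun _ => K))
      · apply Filter.Eventually.of_forall
        intro t
        have hdiv : Continuous (fun x : ℝ => x / t) := continuous_id.div_const t
        have hpath : Continuous (fun x : ℝ => ((x, t) : ℝ × ℝ)) :=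
          continuous_id.prodMk continuous_const
        exact ((hVc.comp hdiv).mul (hΦc.comp hpath)).aestronglyMeasurable
      · apply Filter.Eventually.of_forall
        intro t
        apply Filter.Eventually.of_forall
        intro x
        by_cases hx : x ∈ Set.Icc (-(R+1)) (R+1)
        · rw [Set.indicator_of_mem hx, Real.norm_eq_abs, abs_mul]
          calc |fanV l ρ (x / t)| * |φ x t| ≤ 1 * K :=
              mul_le_mul (hVb _) (hKΦ x t) (abs_nonneg _) zero_le_one
            _ = K := one_mul K
        · have hxR : R < |x| := by
            have := habs_out (R+1) x hx
            linarith
          have h := hout x t (lt_of_lt_of_le hxR (le_max_left _ _))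
          rw [Set.indicator_of_notMem hx]
          have : φ x t = 0 := h.1
          rw [this]
          simp
      · rw [integrable_indicator_iff measurableSet_Icc]
        exact integrableOn_const measure_Icc_lt_top.ne
      · filter_upwards [hae] with x hx
        have hφlim : Filter.Tendsto (fun t : ℝ => φ x t) (nhdsWithin 0 (Set.Ioi 0))
            (nhds (φ x 0)) := by
          have : ContinuousAt (fun t : ℝ => Φ (x, t)) 0 :=
            hΦc.continuousAt.comp ((continuous_const.prodMk continuous_id).continuousAt)
          exact this.tendsto.mono_left nhdsWithin_le_nhds
        have hVlim : ∀ᶠ t in nhdsWithin 0 (Set.Ioi 0), fanV l ρ (x / t) = u₀ x := by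
          rcases lt_or_gt_of_ne hx with hxneg | hxpos
          · -- x < 0 : the value is l
            have hu₀x : u₀ x = l := by rw [hu₀ x, if_pos hxneg]
            set δ : ℝ := if depH l < 0 then x / depH l else 1 with hδdef
            have hδ0 : 0 < δ := by
              rw [hδdef]
              split_ifs with hc
              · exact div_pos_of_neg_of_neg hxneg hc
              · exact one_pos
            filter_upwards [Ioo_mem_nhdsGT_of_mem (Set.mem_Ico.mpr ⟨le_rfl, hδ0⟩)] with t ht
            have ht0 : 0 < t := ht.1
            have hcond : x / t ≤ depH l := by
              rw [div_le_iff₀ ht0]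
              by_cases hc : depH l < 0
              · have htδ : t < x / depH l := by
                  have := ht.2
                  rwa [hδdef, if_pos hc] at this
                have := (lt_div_iff_of_neg hc).mp htδ
                linarith
              · have := mul_nonneg (not_lt.mp hc) (le_of_lt ht0)
                linarith
            rw [hu₀x]
            unfold fanV
            rw [if_pos hcond]
          · -- x > 0 : the value is ρ
            have hu₀x : u₀ x = ρ := by rw [hu₀ x, if_neg (not_lt.mpr (le_of_lt hxpos))]
            set δ : ℝ := if 0 < depH ρ then x / depH ρ else 1 with hδdef
            have hδ0 : 0 < δ := by
              rw [hδdef]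
              split_ifs with hc
              · exact div_pos hxpos hc
              · exact one_pos
            filter_upwards [Ioo_mem_nhdsGT_of_mem (Set.mem_Ico.mpr ⟨le_rfl, hδ0⟩)] with t ht
            have ht0 : 0 < t := ht.1
            have hcond : depH ρ < x / t := by
              by_cases hc : 0 < depH ρ
              · have htδ : t < x / depH ρ := by
                  have := ht.2
                  rwa [hδdef, if_pos hc] at this
                rw [lt_div_iff₀ ht0]
                calc depH ρ * t < depH ρ * (x / depH ρ) := by
                      exact mul_lt_mul_of_pos_left htδ hc
                  _ = x := by field_simp
              · exact lt_of_le_of_lt (not_lt.mp hc) (div_pos hxpos ht0)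
            rw [hu₀x]
            unfold fanV
            rw [if_neg (not_le.mpr (lt_of_le_of_lt (depH_mono hl hρ hlρ) hcond)),
              if_neg (not_lt.mpr (le_of_lt hcond))]
        have hVlim' : (fun t : ℝ => fanV l ρ (x / t))
            =ᶠ[nhdsWithin 0 (Set.Ioi 0)] (fun _ => u₀ x) := hVlim
        have hVtend : Filter.Tendsto (fun t : ℝ => fanV l ρ (x / t))
            (nhdsWithin 0 (Set.Ioi 0)) (nhds (u₀ x)) :=
          Filter.Tendsto.congr' hVlim'.symm tendsto_const_nhds
        exact hVtend.mul hφlim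
    apply Filter.Tendsto.congr' ?_ h1
    filter_upwards [self_mem_nhdsWithin] with t ht
    rw [hIbardef]
    simp only [if_pos (Set.mem_Ioi.mp ht)]
  -- continuity of Ibar on [0, T]
  have hIbarCont : ContinuousOn Ibar (Set.Icc 0 T) := by
    intro t ht
    rcases eq_or_lt_of_le ht.1 with h0 | h0
    · subst h0
      unfold ContinuousWithinAt
      rw [hIbar0]
      have hsubset : Set.Icc (0:ℝ) T ⊆ insert 0 (Set.Ioi 0) := by
        intro y hy
        rcases eq_or_lt_of_le hy.1 with h | h
        · exact Set.mem_insert_iff.mpr (Or.inl h.symm)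
        · exact Set.mem_insert_iff.mpr (Or.inr h)
      apply Filter.Tendsto.mono_left ?_ (nhdsWithin_mono 0 hsubset)
      rw [nhdsWithin_insert]
      rw [Filter.tendsto_sup]
      constructor
      · have := tendsto_pure_nhds Ibar 0
        rwa [hIbar0] at this
      · exact htend
    · have hev : Ibar =ᶠ[nhds t] J := by
        filter_upwards [Ioi_mem_nhds h0] with y hy
        exact hJeq y (Set.mem_Ioi.mp hy)
      exact (((hJderiv t h0).congr_of_eventuallyEq hev).continuousAt).continuousWithinAt
  have hIbarDeriv : ∀ t ∈ Set.Ioo (0:ℝ) T, HasDerivWithinAt Ibar (F t) (Set.Ioi t) t := by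
    intro t ht
    have hev : Ibar =ᶠ[nhds t] J := by
      filter_upwards [Ioi_mem_nhds ht.1] with y hy
      exact hJeq y (Set.mem_Ioi.mp hy)
    exact ((hJderiv t ht.1).congr_of_eventuallyEq hev).hasDerivWithinAt
  -- F is integrable on (0, T]
  have hFnorm : ∀ t : ℝ, ‖F t‖ ≤ ∫ x : ℝ, Cb x := by
    intro t
    rw [hFdef]
    exact norm_integral_le_of_norm_le hCb_int
      (Filter.Eventually.of_forall fun x => hFbound t x)
  have hFIoc : IntegrableOn F (Set.Ioc 0 T) := by
    have hcontOn : ContinuousOn F (Set.Ioc 0 T) := fun t ht =>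
      (hFcont t ht.1).continuousWithinAt
    apply Integrable.mono' (g := fun _ => ∫ x : ℝ, Cb x)
    · exact integrableOn_const measure_Ioc_lt_top.ne
    · exact hcontOn.aestronglyMeasurable measurableSet_Ioc
    · exact Filter.Eventually.of_forall fun t => hFnorm t
  have hFint : IntervalIntegrable F volume 0 T := by
    rw [intervalIntegrable_iff, Set.uIoc_of_le (le_of_lt hT0)]
    exact hFIoc
  -- fundamental theorem of calculus
  have hFTC := intervalIntegral.integral_eq_sub_of_hasDeriv_right_of_le
    (le_of_lt hT0) hIbarCont hIbarDeriv hFint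
  -- Ibar T = 0
  have hIbarT : Ibar T = 0 := by
    rw [hIbardef]
    simp only [if_pos hT0]
    apply integral_eq_zero_of_ae
    apply Filter.Eventually.of_forall
    intro x
    have h := hout x T (lt_of_lt_of_le (by rw [abs_of_pos hT0]; linarith)
      (le_max_right |x| |T|))
    have hz : φ x T = 0 := h.1
    beta_reduce
    rw [hz]
    simp
  -- split the half-line integral
  have hIoiT : ∫ t in Set.Ioi T, F t = 0 := by
    rw [setIntegral_congr_fun measurableSet_Ioi
      (fun t (ht : t ∈ Set.Ioi T) => hFzero t (le_of_lt (Set.mem_Ioi.mp ht)))]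
    exact integral_zero ℝ ℝ
  have hFIoiT : IntegrableOn F (Set.Ioi T) := by
    apply (integrableOn_zero (ε' := ℝ)).congr_fun ?_ measurableSet_Ioi
    intro t ht
    exact (hFzero t (le_of_lt (Set.mem_Ioi.mp ht))).symm
  have hsplit : ∫ t in Set.Ioi (0:ℝ), F t
      = (∫ t in Set.Ioc 0 T, F t) + ∫ t in Set.Ioi T, F t := by
    rw [← setIntegral_union (Set.Ioc_disjoint_Ioi le_rfl) measurableSet_Ioi hFIoc hFIoiT,
      Set.Ioc_union_Ioi_eq_Ioi (le_of_lt hT0)]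
  have hIoc : (∫ t in Set.Ioc (0:ℝ) T, F t) = ∫ t in (0:ℝ)..T, F t :=
    (intervalIntegral.integral_of_le (le_of_lt hT0)).symm
  rw [hgoal, hsplit, hIoiT, hIoc, hFTC, hIbarT, hIbar0]
  ring
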